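/- Let F be a finite field with q elements and K/F an extension of degree n. If χ is a nontrivial multiplicative character of K* that is trivial on F*, then |E(χ)| = q^{n/2 - 1}, where E(χ) = Σ_{Tr(s)=1} χ(s). -/

import Mathlib

open Finset

theorem abs_eisenstein_of_trivial_on_base
    (F K : Type*) [Field F] [Field K] [Fintype F] [Fintype K] [DecidableEq F] [DecidableEq K]
    [Algebra F K] (q n : ℕ) (hq : Fintype.card F = q) (hn : Module.finrank F K = n)
    (χ : Kˣ →* ℂ) (hχ : χ ≠ 1)
    (hres : ∀ u : Fˣ, χ (Units.map (algebraMap F K : F →+* K).toMonoidHom u) = 1) :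
    ‖(∑ s ∈ Finset.univ.filter (fun s : Kˣ => Algebra.trace F K (s : K) = 1), χ s)‖ =
      (q : ℝ) ^ ((n : ℝ) / 2 - 1) := by
  classical
  have hFD : FiniteDimensional F K := Module.Finite.of_finite
  have hq2 : 1 < q := hq ▸ Fintype.one_lt_card
  have hq0 : (0 : ℝ) < (q : ℝ) := by exact_mod_cast Nat.lt_of_lt_of_le Nat.zero_lt_one hq2.le
  -- the multiplicative character as a `MulChar`
  set χK : MulChar K ℂ := MulChar.ofUnitHom χ.toHomUnits with hχKdef
  have hχKu : ∀ u : Kˣ, χK (u : K) = χ u := fun u => by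
    rw [hχKdef, MulChar.ofUnitHom_coe, MonoidHom.coe_toHomUnits]
  have hχK1 : χK ≠ 1 := by
    intro h
    apply hχ
    ext u
    have h2 := hχKu u
    rw [h, MulChar.one_apply_coe] at h2
    simp [← h2]
  have hχKF : ∀ t : F, t ≠ 0 → χK (algebraMap F K t) = 1 := by
    intro t ht
    have h2 := hχKu (Units.map (algebraMap F K : F →+* K).toMonoidHom (Units.mk0 t ht))
    rw [hres] at h2
    simpa using h2
  -- fiber sums of `χK` over the trace
  set S : F → ℂ := fun t => ∑ x ∈ univ.filter (fun x : K => Algebra.trace F K x = t), χK x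
    with hSdef
  -- the sum in the statement equals `S 1`
  have hE : (∑ s ∈ univ.filter (fun s : Kˣ => Algebra.trace F K (s : K) = 1), χ s) = S 1 := by
    rw [hSdef]
    refine Finset.sum_nbij' (i := fun u : Kˣ => (u : K))
      (j := fun x : K => if hx : x = 0 then 1 else Units.mk0 x hx)
      (fun u hu => ?_) (fun x hx => ?_) (fun u hu => ?_) (fun x hx => ?_) (fun u hu => ?_)
    · simp only [mem_filter, mem_univ, true_and] at hu ⊢
      exact hu
    · simp only [mem_filter, mem_univ, true_and] at hx ⊢
      have hx0 : x ≠ 0 := by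
        intro h0
        rw [h0, map_zero] at hx
        exact one_ne_zero hx.symm
      rw [dif_neg hx0]
      exact hx
    · have h0 : (u : K) ≠ 0 := u.ne_zero
      simp only [dif_neg h0]
      exact Units.ext rfl
    · simp only [mem_filter, mem_univ, true_and] at hx
      have hx0 : x ≠ 0 := by
        intro h0
        rw [h0, map_zero] at hx
        exact one_ne_zero hx.symm
      simp [dif_neg hx0]
    · exact (hχKu u).symm
  -- fibers over nonzero elements all give `S 1`
  have hfiber : ∀ t : F, t ≠ 0 → S t = S 1 := by
    intro t ht
    rw [hSdef]
    refine Finset.sum_nbij' (i := fun x : K => algebraMap F K t⁻¹ * x)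
      (j := fun y : K => algebraMap F K t * y)
      (fun x hx => ?_) (fun y hy => ?_) (fun x hx => ?_) (fun y hy => ?_) (fun x hx => ?_)
    · simp only [mem_filter, mem_univ, true_and] at hx ⊢
      rw [← Algebra.smul_def, map_smul, hx, smul_eq_mul, inv_mul_cancel₀ ht]
    · simp only [mem_filter, mem_univ, true_and] at hy ⊢
      rw [← Algebra.smul_def, map_smul, hy, smul_eq_mul, mul_one]
    · rw [← mul_assoc, ← map_mul, mul_inv_cancel₀ ht, map_one, one_mul]
    · rw [← mul_assoc, ← map_mul, inv_mul_cancel₀ ht, map_one, one_mul]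
    · rw [map_mul, hχKF t⁻¹ (inv_ne_zero ht), one_mul]
  -- total sum of fibers is zero
  have htotal : ∑ t : F, S t = 0 := by
    rw [hSdef]
    rw [Finset.sum_fiberwise_of_maps_to (fun x _ => mem_univ (Algebra.trace F K x)) χK]
    exact MulChar.sum_eq_zero_of_ne_one hχK1
  have hcard_erase : ((univ : Finset F).erase 0).card = q - 1 := by
    rw [Finset.card_erase_of_mem (mem_univ 0), Finset.card_univ, hq]
  have hS0 : S 0 = -((q : ℂ) - 1) * S 1 := by
    have h0 : ∑ t : F, S t = S 0 + ∑ t ∈ univ.erase 0, S t :=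
      (Finset.add_sum_erase _ _ (mem_univ 0)).symm
    rw [Finset.sum_congr rfl (fun t ht => hfiber t (Finset.ne_of_mem_erase ht)),
      Finset.sum_const, hcard_erase, htotal] at h0
    have hcast : ((q - 1 : ℕ) : ℂ) = (q : ℂ) - 1 := by
      push_cast [Nat.cast_sub hq2.le]
      ring
    rw [nsmul_eq_mul, hcast] at h0
    linear_combination -h0
  -- additive characters
  set ψ := AddChar.FiniteField.primitiveChar_to_Complex F with hψdef
  have hψprim : ψ.IsPrimitive := AddChar.FiniteField.primitiveChar_to_Complex_isPrimitive F
  have hψ1 : ψ ≠ 1 := by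
    intro h
    apply hψprim (one_ne_zero (α := F))
    rw [AddChar.mulShift_one, h]
  set Ψ : AddChar K ℂ := ψ.compAddMonoidHom (Algebra.trace F K).toAddMonoidHom with hΨdef
  have hΨapp : ∀ x : K, Ψ x = ψ (Algebra.trace F K x) := fun x => rfl
  have hΨ1 : Ψ ≠ 1 := by
    obtain ⟨a, ha⟩ := AddChar.ne_one_iff.mp hψ1
    obtain ⟨x, hx⟩ := Algebra.trace_surjective F K a
    exact AddChar.ne_one_iff.mpr ⟨x, by rw [hΨapp, hx]; exact ha⟩
  have hΨprim : Ψ.IsPrimitive := AddChar.IsPrimitive.of_ne_one hΨ1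
  -- computing the Gauss sum via fibers
  have hψsum : ∑ t ∈ (univ : Finset F).erase 0, ψ t = -1 := by
    have h0 := AddChar.sum_eq_zero_of_ne_one hψ1
    rw [← Finset.add_sum_erase _ _ (mem_univ (0 : F)), AddChar.map_zero_eq_one] at h0
    linear_combination h0
  have hg1 : gaussSum χK Ψ = S 0 - S 1 := by
    rw [gaussSum,
      ← Finset.sum_fiberwise_of_maps_to (fun x _ => mem_univ (Algebra.trace F K x))
        (fun x => χK x * Ψ x)]
    have hfib : ∀ t : F, ∑ x ∈ univ.filter (fun x : K => Algebra.trace F K x = t),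
        χK x * Ψ x = S t * ψ t := by
      intro t
      rw [hSdef]
      simp only
      rw [Finset.sum_mul]
      refine Finset.sum_congr rfl fun x hx => ?_
      rw [hΨapp, (Finset.mem_filter.mp hx).2]
    rw [Finset.sum_congr rfl fun t _ => hfib t,
      ← Finset.add_sum_erase _ _ (mem_univ (0 : F)), AddChar.map_zero_eq_one, mul_one,
      Finset.sum_congr rfl (fun t ht => by
        rw [hfiber t (Finset.ne_of_mem_erase ht)]),
      ← Finset.mul_sum, hψsum]
    ring
  have hgE : gaussSum χK Ψ = -(q : ℂ) * S 1 := by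
    rw [hg1, hS0]; ring
  -- conjugation of the Gauss sum
  have hconj : (starRingEnd ℂ) (gaussSum χK Ψ) = gaussSum χK⁻¹ Ψ⁻¹ := by
    rw [gaussSum, gaussSum, map_sum]
    refine Finset.sum_congr rfl fun x _ => ?_
    rw [map_mul]
    congr 1
    · exact MulChar.star_apply' χK x
    · have hpow : (Ψ x) ^ Fintype.card K = 1 := by
        rw [← AddChar.map_nsmul_eq_pow, card_nsmul_eq_zero, AddChar.map_zero_eq_one]
      have hnorm : ‖Ψ x‖ = 1 :=
        Complex.norm_eq_one_of_pow_eq_one hpow Fintype.card_ne_zero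
      rw [AddChar.inv_apply', ← Complex.inv_eq_conj hnorm]
  -- |G|^2 = card K
  have hcardK : (Fintype.card K : ℝ) = (q : ℝ) ^ n := by
    have := Module.card_eq_pow_finrank (K := F) (V := K)
    rw [hq, hn] at this
    exact_mod_cast this
  have hGG : gaussSum χK Ψ * (starRingEnd ℂ) (gaussSum χK Ψ) = (Fintype.card K : ℂ) := by
    rw [hconj]
    exact gaussSum_mul_gaussSum_eq_card hχK1 hΨprim
  have habs2 : (‖gaussSum χK Ψ‖) ^ 2 = (q : ℝ) ^ n := by
    have h1 : ((Complex.normSq (gaussSum χK Ψ) : ℝ) : ℂ) = ((Fintype.card K : ℝ) : ℂ) := by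
      rw [← Complex.mul_conj, hGG]
      norm_num
    have h2 : (Complex.normSq (gaussSum χK Ψ) : ℝ) = (Fintype.card K : ℝ) :=
      Complex.ofReal_inj.mp h1
    rw [Complex.sq_norm, h2, hcardK]
  -- put everything together
  rw [hE]
  have hqA : (q : ℝ) * ‖S 1‖ = ‖gaussSum χK Ψ‖ := by
    rw [hgE, norm_mul]
    congr 1
    rw [norm_neg, Complex.norm_natCast]
  have hhalf : ((q : ℝ) ^ ((n : ℝ) / 2)) ^ 2 = (q : ℝ) ^ n := by
    rw [← Real.rpow_natCast ((q : ℝ) ^ ((n : ℝ) / 2)) 2, ← Real.rpow_mul hq0.le]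
    norm_num
  have hkey : (q : ℝ) * ‖S 1‖ = (q : ℝ) ^ ((n : ℝ) / 2) := by
    have hsq : ((q : ℝ) * ‖S 1‖) ^ 2 = ((q : ℝ) ^ ((n : ℝ) / 2)) ^ 2 := by
      rw [hqA, habs2, hhalf]
    have h1 : (0 : ℝ) ≤ (q : ℝ) * ‖S 1‖ := by positivity
    have h2 : (0 : ℝ) ≤ (q : ℝ) ^ ((n : ℝ) / 2) := Real.rpow_nonneg hq0.le _
    have h3 := congrArg Real.sqrt hsq
    rwa [Real.sqrt_sq h1, Real.sqrt_sq h2] at h3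
  have := congrArg (fun x => x / (q : ℝ)) hkey
  rw [mul_comm, mul_div_assoc, div_self hq0.ne', mul_one] at this
  rw [this, Real.rpow_sub hq0, Real.rpow_one]
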